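/- Let m ≥ 1. Then the graph SR(m,n) is connected, and its diameter (the maximum over all pairs of vertices of the graph distance) equals min(m−1, n). -/

import Mathlib

open Matrix Polynomial

/-- Vertices of the simplicial rook graph: nonnegative integer vectors of length `m` summing to `n`. -/
abbrev SRVertex (m n : ℕ) : Type := {x : Fin m → ℕ // ∑ i, x i = n}

instance (m n : ℕ) : Fintype (SRVertex m n) :=
  Fintype.subtype (Finset.Nat.antidiagonalTuple m n) fun _ =>
    Finset.Nat.mem_antidiagonalTuple

/-- The simplicial rook graph `SR(m,n)`. -/
def SR (m n : ℕ) : SimpleGraph (SRVertex m n) where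
  Adj x y := (Finset.univ.filter fun i => x.1 i ≠ y.1 i).card = 2
  symm := by
    constructor
    intro x y h
    have : (Finset.univ.filter fun i => y.1 i ≠ x.1 i)
        = (Finset.univ.filter fun i => x.1 i ≠ y.1 i) := by
      apply Finset.filter_congr
      intro i _
      simp [ne_comm]
    rw [this]; exact h
  loopless := by
    constructor
    intro x h
    simp at h

instance (m n : ℕ) : DecidableRel (SR m n).Adj := fun x y =>
  inferInstanceAs (Decidable ((Finset.univ.filter fun i => x.1 i ≠ y.1 i).card = 2))

namespace SRAux

variable {m n : ℕ}

/-- Splitting a sum over `Fin m` at two distinct indices. -/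
lemma sum_split (i j : Fin m) (hij : i ≠ j) (f : Fin m → ℕ) :
    ∑ a, f a = f i + (f j + ∑ a ∈ (Finset.univ.erase i).erase j, f a) := by
  rw [← Finset.add_sum_erase _ f (Finset.mem_univ i),
    ← Finset.add_sum_erase _ f (show j ∈ Finset.univ.erase i by
      simp [Finset.mem_erase, hij.symm])]

/-- The total deficit of `x` relative to `y`. -/
def deficit (x y : SRVertex m n) : ℕ := ∑ i, (y.1 i - x.1 i)

lemma deficit_le (x y : SRVertex m n) : deficit x y ≤ n := by
  calc deficit x y ≤ ∑ i, y.1 i := Finset.sum_le_sum fun i _ => Nat.sub_le _ _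
  _ = n := y.2

lemma eq_of_deficit_eq_zero {x y : SRVertex m n} (h : deficit x y = 0) : x = y := by
  have hle : ∀ i, y.1 i ≤ x.1 i := by
    intro i
    have := Finset.sum_eq_zero_iff.mp h i (Finset.mem_univ i)
    omega
  have hsum : ∑ i, y.1 i = ∑ i, x.1 i := by rw [x.2, y.2]
  have := (Finset.sum_eq_sum_iff_of_le (fun i _ => hle i)).mp hsum
  apply Subtype.ext
  funext i
  exact (this i (Finset.mem_univ i)).symm

/-- Main constructive lemma: there is a walk from `x` to `y` whose length is bounded both by
the number of differing coordinates minus one, and by the deficit. -/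
lemma exists_walk (x y : SRVertex m n) :
    ∃ w : (SR m n).Walk x y,
      w.length ≤ (Finset.univ.filter fun i => x.1 i ≠ y.1 i).card - 1 ∧
      w.length ≤ deficit x y := by
  suffices H : ∀ (d : ℕ) (x : SRVertex m n), deficit x y ≤ d →
      ∃ w : (SR m n).Walk x y,
        w.length ≤ (Finset.univ.filter fun i => x.1 i ≠ y.1 i).card - 1 ∧
        w.length ≤ deficit x y from H (deficit x y) x le_rfl
  intro d
  induction d with
  | zero =>
    intro x hd
    have : x = y := eq_of_deficit_eq_zero (Nat.le_zero.mp hd)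
    subst this
    exact ⟨SimpleGraph.Walk.nil, by simp, by simp⟩
  | succ d ih =>
    intro x hd
    by_cases hxy : x = y
    · subst hxy
      exact ⟨SimpleGraph.Walk.nil, by simp, by simp⟩
    · -- pick a surplus coordinate i and a deficit coordinate j
      have hx2 : ∑ a, x.1 a = ∑ a, y.1 a := by rw [x.2, y.2]
      have hexj : ∃ j, x.1 j < y.1 j := by
        by_contra hc
        push_neg at hc
        exact hxy (Subtype.ext (funext fun a =>
          ((Finset.sum_eq_sum_iff_of_le (fun a _ => hc a)).mp hx2.symm a
            (Finset.mem_univ a)).symm))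
      have hexi : ∃ i, y.1 i < x.1 i := by
        by_contra hc
        push_neg at hc
        exact hxy (Subtype.ext (funext fun a =>
          (Finset.sum_eq_sum_iff_of_le (fun a _ => hc a)).mp hx2 a (Finset.mem_univ a)))
      obtain ⟨i, hi⟩ := hexi
      obtain ⟨j, hj⟩ := hexj
      have hij : i ≠ j := by intro h; rw [h] at hi; omega
      set t : ℕ := min (x.1 i - y.1 i) (y.1 j - x.1 j) with ht
      have ht1 : 1 ≤ t := le_min (by omega) (by omega)
      have hti : t ≤ x.1 i - y.1 i := min_le_left _ _
      have htj : t ≤ y.1 j - x.1 j := min_le_right _ _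
      -- the new vertex
      set f : Fin m → ℕ := fun a => if a = i then x.1 i - t else if a = j then x.1 j + t else x.1 a
        with hf
      have hfi : f i = x.1 i - t := by simp [hf]
      have hfj : f j = x.1 j + t := by simp [hf, hij.symm]
      have hfo : ∀ a, a ≠ i → a ≠ j → f a = x.1 a := by
        intro a h1 h2; simp [hf, h1, h2]
      have hRsame : ∑ a ∈ (Finset.univ.erase i).erase j, f a
          = ∑ a ∈ (Finset.univ.erase i).erase j, x.1 a := by
        apply Finset.sum_congr rfl
        intro a ha
        simp only [Finset.mem_erase] at ha
        exact hfo a ha.2.1 ha.1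
      have hfsum : ∑ a, f a = n := by
        have h1 := sum_split i j hij f
        have h2 := sum_split i j hij x.1
        rw [x.2] at h2
        rw [h1, hfi, hfj, hRsame]
        omega
      set x' : SRVertex m n := ⟨f, hfsum⟩ with hx'
      -- adjacency
      have hdiffxx' : (Finset.univ.filter fun a => x.1 a ≠ x'.1 a) = {i, j} := by
        ext a
        simp only [Finset.mem_filter, Finset.mem_univ, true_and, Finset.mem_insert,
          Finset.mem_singleton]
        constructor
        · intro hne
          by_contra hc
          push_neg at hc
          exact hne (hfo a hc.1 hc.2).symm
        · rintro (rfl | rfl)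
          · change x.1 a ≠ f a; rw [hfi]; omega
          · change x.1 a ≠ f a; rw [hfj]; omega
      have hadj : (SR m n).Adj x x' := by
        show (Finset.univ.filter fun a => x.1 a ≠ x'.1 a).card = 2
        rw [hdiffxx']
        rw [Finset.card_insert_of_notMem (by simp [hij]), Finset.card_singleton]
      -- deficit decreases
      have hdef : deficit x' y + 1 ≤ deficit x y := by
        have h1 := sum_split i j hij (fun a => y.1 a - f a)
        have h2 := sum_split i j hij (fun a => y.1 a - x.1 a)
        have hR : ∑ a ∈ (Finset.univ.erase i).erase j, (y.1 a - f a)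
            = ∑ a ∈ (Finset.univ.erase i).erase j, (y.1 a - x.1 a) := by
          apply Finset.sum_congr rfl
          intro a ha
          simp only [Finset.mem_erase] at ha
          rw [hfo a ha.2.1 ha.1]
        simp only [hfi, hfj] at h1
        have hD1 : deficit x' y = ∑ a, (y.1 a - f a) := rfl
        have hD2 : deficit x y = ∑ a, (y.1 a - x.1 a) := rfl
        rw [hD1, h1, hR, hD2, h2]
        omega
      -- differing set shrinks
      have hcard2 : 2 ≤ (Finset.univ.filter fun a => x.1 a ≠ y.1 a).card := by
        have hsub : ({i, j} : Finset (Fin m)) ⊆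
            Finset.univ.filter fun a => x.1 a ≠ y.1 a := by
          intro a ha
          simp only [Finset.mem_insert, Finset.mem_singleton] at ha
          rcases ha with rfl | rfl <;> simp only [Finset.mem_filter, Finset.mem_univ, true_and]
          · omega
          · omega
        calc 2 = ({i, j} : Finset (Fin m)).card := by
              rw [Finset.card_insert_of_notMem (by simp [hij]), Finset.card_singleton]
        _ ≤ _ := Finset.card_le_card hsub
      have hshrink : (Finset.univ.filter fun a => x'.1 a ≠ y.1 a).card + 1
          ≤ (Finset.univ.filter fun a => x.1 a ≠ y.1 a).card := by
        -- one of i, j gets matched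
        obtain ⟨c, hc_mem, hc_eq, hc_other⟩ :
            ∃ c, (x.1 c ≠ y.1 c) ∧ (x'.1 c = y.1 c) ∧ (c = i ∨ c = j) := by
          rcases le_or_gt (x.1 i - y.1 i) (y.1 j - x.1 j) with hle | hlt
          · refine ⟨i, by omega, ?_, Or.inl rfl⟩
            rw [show x'.1 i = x.1 i - t from hfi]
            omega
          · refine ⟨j, by omega, ?_, Or.inr rfl⟩
            rw [show x'.1 j = x.1 j + t from hfj]
            omega
        have hsub : (Finset.univ.filter fun a => x'.1 a ≠ y.1 a)
            ⊆ (Finset.univ.filter fun a => x.1 a ≠ y.1 a).erase c := by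
          intro a ha
          simp only [Finset.mem_filter, Finset.mem_univ, true_and] at ha
          simp only [Finset.mem_erase, Finset.mem_filter, Finset.mem_univ, true_and]
          constructor
          · intro h; rw [h] at ha; exact ha hc_eq
          · by_cases h1 : a = i
            · subst h1; omega
            · by_cases h2 : a = j
              · subst h2; omega
              · rw [← hfo a h1 h2]; exact ha
        have hcmem : c ∈ Finset.univ.filter fun a => x.1 a ≠ y.1 a := by
          simp only [Finset.mem_filter, Finset.mem_univ, true_and]; exact hc_mem
        have := Finset.card_le_card hsub
        rw [Finset.card_erase_of_mem hcmem] at this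
        have hpos : 0 < (Finset.univ.filter fun a => x.1 a ≠ y.1 a).card :=
          Finset.card_pos.mpr ⟨c, hcmem⟩
        omega
      -- recurse
      obtain ⟨w', hw1, hw2⟩ := ih x' (by omega)
      refine ⟨SimpleGraph.Walk.cons hadj w', ?_, ?_⟩
      · simp only [SimpleGraph.Walk.length_cons]
        omega
      · simp only [SimpleGraph.Walk.length_cons]
        omega

/-- Lower bound: every walk from `x` to `y` has length at least the number of coordinates
where `x` is strictly smaller than `y`. -/
lemma walk_lower (x y : SRVertex m n) (w : (SR m n).Walk x y) :
    (Finset.univ.filter fun i => x.1 i < y.1 i).card ≤ w.length := by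
  induction w with
  | nil => simp
  | @cons u b y hadj w ih =>
    have hone : (Finset.univ.filter fun a => u.1 a < b.1 a).card ≤ 1 := by
      rw [Finset.card_le_one]
      intro a ha a' ha'
      simp only [Finset.mem_filter, Finset.mem_univ, true_and] at ha ha'
      by_contra hab
      have hadj' : (Finset.univ.filter fun i => u.1 i ≠ b.1 i).card = 2 := hadj
      have hsub : ({a, a'} : Finset (Fin m)) ⊆
          Finset.univ.filter fun i => u.1 i ≠ b.1 i := by
        intro c hc
        simp only [Finset.mem_insert, Finset.mem_singleton] at hc
        rcases hc with rfl | rfl <;> simp only [Finset.mem_filter, Finset.mem_univ, true_and]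
        · omega
        · omega
      have hcardpair : ({a, a'} : Finset (Fin m)).card = 2 := by
        rw [Finset.card_insert_of_notMem (by simp [hab]), Finset.card_singleton]
      have heq : ({a, a'} : Finset (Fin m))
          = Finset.univ.filter fun i => u.1 i ≠ b.1 i :=
        Finset.eq_of_subset_of_card_le hsub (by omega)
      have hle : ∀ c, u.1 c ≤ b.1 c := by
        intro c
        by_cases hc : u.1 c = b.1 c
        · omega
        · have : c ∈ ({a, a'} : Finset (Fin m)) := by
            rw [heq]; simp only [Finset.mem_filter, Finset.mem_univ, true_and]; exact hc
          simp only [Finset.mem_insert, Finset.mem_singleton] at this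
          rcases this with rfl | rfl <;> omega
      have hlt : ∑ c, u.1 c < ∑ c, b.1 c :=
        Finset.sum_lt_sum (fun c _ => hle c) ⟨a, Finset.mem_univ a, ha⟩
      rw [u.2, b.2] at hlt
      omega
    have hsub : (Finset.univ.filter fun i => u.1 i < y.1 i)
        ⊆ (Finset.univ.filter fun i => b.1 i < y.1 i)
          ∪ (Finset.univ.filter fun a => u.1 a < b.1 a) := by
      intro c hc
      simp only [Finset.mem_filter, Finset.mem_univ, true_and] at hc
      simp only [Finset.mem_union, Finset.mem_filter, Finset.mem_univ, true_and]
      omega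
    simp only [SimpleGraph.Walk.length_cons]
    calc (Finset.univ.filter fun i => u.1 i < y.1 i).card
        ≤ ((Finset.univ.filter fun i => b.1 i < y.1 i)
          ∪ (Finset.univ.filter fun a => u.1 a < b.1 a)).card := Finset.card_le_card hsub
      _ ≤ (Finset.univ.filter fun i => b.1 i < y.1 i).card
          + (Finset.univ.filter fun a => u.1 a < b.1 a).card := Finset.card_union_le _ _
      _ ≤ w.length + 1 := by omega

end SRAux

/-- For `m ≥ 1`, the graph `SR(m,n)` is connected and has diameter `min (m-1) n`. -/
theorem SR_diameter (m n : ℕ) (hm : 1 ≤ m) :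
    (SR m n).Connected ∧ (SR m n).diam = min (m - 1) n := by
  set k := min (m - 1) n with hk
  have hkm : k ≤ m - 1 := min_le_left _ _
  have hkn : k ≤ n := min_le_right _ _
  set z : Fin m := ⟨0, hm⟩ with hz
  -- the extremal pair
  have hx0sum : ∑ i : Fin m, (if i = z then n else 0) = n := by
    simp [Finset.sum_ite_eq']
  have hbandcard :
      (Finset.univ.filter fun i : Fin m => i.val ≠ 0 ∧ i.val ≤ k).card = k := by
    have hlt : ∀ a ∈ Finset.Icc 1 k, a < m := by
      intro a ha
      simp only [Finset.mem_Icc] at ha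
      omega
    have : (Finset.univ.filter fun i : Fin m => i.val ≠ 0 ∧ i.val ≤ k)
        = (Finset.Icc 1 k).attachFin hlt := by
      ext i
      simp only [Finset.mem_filter, Finset.mem_univ, true_and, Finset.mem_attachFin,
        Finset.mem_Icc]
      omega
    rw [this, Finset.card_attachFin, Nat.card_Icc]
    omega
  have hy0sum : ∑ i : Fin m,
      (if i = z then n - k else if i.val ≤ k then 1 else 0) = n := by
    rw [← Finset.add_sum_erase _ _ (Finset.mem_univ z), if_pos rfl]
    have h1 : ∑ i ∈ Finset.univ.erase z,
        (if i = z then n - k else if i.val ≤ k then 1 else 0)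
        = ∑ i ∈ Finset.univ.erase z, (if i.val ≤ k then 1 else 0) := by
      apply Finset.sum_congr rfl
      intro i hi
      simp only [Finset.mem_erase] at hi
      rw [if_neg hi.1]
    have h2 : Finset.filter (fun i : Fin m => i.val ≤ k) (Finset.univ.erase z)
        = Finset.univ.filter fun i : Fin m => i.val ≠ 0 ∧ i.val ≤ k := by
      ext i
      have hiz : i = z ↔ (i : ℕ) = 0 := by
        rw [Fin.ext_iff]
      simp only [Finset.mem_filter, Finset.mem_erase, Finset.mem_univ, true_and, and_comm]
      simp [hiz]
    have h3 : ∑ i ∈ Finset.univ.erase z, (if (i : ℕ) ≤ k then 1 else 0)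
        = (Finset.filter (fun i : Fin m => (i : ℕ) ≤ k) (Finset.univ.erase z)).card :=
      (Finset.card_filter _ _).symm
    rw [h1, h3, h2, hbandcard]
    omega
  set x0 : SRVertex m n := ⟨fun i => if i = z then n else 0, hx0sum⟩ with hx0
  set y0 : SRVertex m n := ⟨fun i => if i = z then n - k else if i.val ≤ k then 1 else 0,
    hy0sum⟩ with hy0
  have hlowcard : (Finset.univ.filter fun i => x0.1 i < y0.1 i).card = k := by
    have : (Finset.univ.filter fun i => x0.1 i < y0.1 i)
        = Finset.univ.filter fun i : Fin m => i.val ≠ 0 ∧ i.val ≤ k := by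
      ext i
      simp only [Finset.mem_filter, Finset.mem_univ, true_and, hx0, hy0]
      by_cases hiz : i = z
      · subst hiz
        rw [if_pos rfl, if_pos rfl]
        have hzv : (z : ℕ) = 0 := rfl
        simp only [hzv]
        omega
      · rw [if_neg hiz, if_neg hiz]
        have : i.val ≠ 0 := by
          intro h
          exact hiz (Fin.ext h)
        by_cases hik : i.val ≤ k <;> simp [hik, this]
    rw [this, hbandcard]
  -- upper bound on every edist
  have hub : ∀ x y : SRVertex m n, (SR m n).edist x y ≤ (k : ℕ∞) := by
    intro x y
    obtain ⟨w, hw1, hw2⟩ := SRAux.exists_walk x y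
    have hlen : w.length ≤ k := by
      have hd1 : (Finset.univ.filter fun i => x.1 i ≠ y.1 i).card ≤ m := by
        calc _ ≤ (Finset.univ : Finset (Fin m)).card := Finset.card_filter_le _ _
          _ = m := by simp
      have hd2 := SRAux.deficit_le x y
      omega
    calc (SR m n).edist x y ≤ (w.length : ℕ∞) := SimpleGraph.edist_le w
      _ ≤ (k : ℕ∞) := by exact_mod_cast hlen
  -- connectivity
  have hconn : (SR m n).Connected := by
    rw [SimpleGraph.connected_iff]
    constructor
    · intro x y
      obtain ⟨w, _, _⟩ := SRAux.exists_walk x y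
      exact ⟨w⟩
    · exact ⟨x0⟩
  refine ⟨hconn, ?_⟩
  -- lower bound: edist x0 y0 ≥ k
  have hlb : (k : ℕ∞) ≤ (SR m n).edist x0 y0 := by
    rw [SimpleGraph.edist_eq_sInf]
    apply le_sInf
    rintro b ⟨w, rfl⟩
    have := SRAux.walk_lower x0 y0 w
    rw [hlowcard] at this
    show (k : ℕ∞) ≤ (w.length : ℕ∞)
    exact_mod_cast this
  have hediam : (SR m n).ediam = (k : ℕ∞) := by
    apply le_antisymm
    · exact SimpleGraph.ediam_le_of_edist_le hub
    · exact le_trans hlb SimpleGraph.edist_le_ediam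
  rw [SimpleGraph.diam, hediam, ENat.toNat_coe]
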